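/- For every integer n ≥ 1, the number of inversion sequences of length n avoiding both patterns 001 and 210 equals the n-th cake number: |I_n(001,210)| = binom(n,3) + n. -/
import Mathlib


/-- An inversion sequence of length `n` (0-indexed): `e i ≤ i` for all `i`. -/
def InvSeq {n : ℕ} (e : Fin n → ℕ) : Prop := ∀ i : Fin n, e i ≤ (i : ℕ)

/-- `e` contains the pattern `p` (a word of nonnegative integers): there is a
strictly increasing choice of positions on which `e` is order-isomorphic to `p`. -/
def Contains {n : ℕ} (e : Fin n → ℕ) (p : List ℕ) : Prop :=
  ∃ s : Fin p.length → Fin n, StrictMono s ∧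
    ∀ a b : Fin p.length,
      (p.get a < p.get b ↔ e (s a) < e (s b)) ∧
      (p.get a = p.get b ↔ e (s a) = e (s b))

/-- `e` avoids the pattern `p`. -/
def Avoids {n : ℕ} (e : Fin n → ℕ) (p : List ℕ) : Prop := ¬ Contains e p

/-- The number of zero entries of `e`. -/
def zeroStat {n : ℕ} (e : Fin n → ℕ) : ℕ :=
  (Finset.univ.filter (fun i : Fin n => e i = 0)).card

/-- The number of distinct positive values among the entries of `e`. -/
def distStat {n : ℕ} (e : Fin n → ℕ) : ℕ :=
  ((Finset.univ.image e).filter (fun v => 0 < v)).card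

/-- The number of repeated entries of `e`: `n - dist e`. -/
def repStat {n : ℕ} (e : Fin n → ℕ) : ℕ := n - distStat e

/-- The number of saturated entries of `e` (1-indexed: `e_i = i - 1`). -/
def satuStat {n : ℕ} (e : Fin n → ℕ) : ℕ :=
  (Finset.univ.filter (fun i : Fin n => e i = (i : ℕ))).card

/-! ### Auxiliary machinery -/

/-- canonical avoider: staircase of length `a`, then `a-1`s up to `b`, then constant `d`. -/
def Fm (n a b d : ℕ) : Fin n → ℕ :=
  fun i => if (i : ℕ) < a then (i : ℕ) else if (i : ℕ) < b then a - 1 else d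

/-- parameter set -/
def Sfin (n : ℕ) : Finset (ℕ × ℕ × ℕ) :=
  ((Finset.range n).sigma fun a => Finset.range a).image (fun p => (p.1, p.1, p.2))
  ∪ {(n, n, 0)}
  ∪ ((Finset.range (n - 1)).sigma fun b => (Finset.range b).sigma fun a =>
      Finset.range a).image (fun p => (p.2.1 + 1, p.1 + 1, p.2.2))

lemma mem_Sfin_eq {n a d : ℕ} (h1 : d < a) (h2 : a < n) : (a, a, d) ∈ Sfin n := by
  apply Finset.mem_union_left
  apply Finset.mem_union_left
  refine Finset.mem_image.2 ⟨⟨a, d⟩, ?_, rfl⟩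
  simp [Finset.mem_sigma, h1, h2]

lemma mem_Sfin_stair {n : ℕ} : (n, n, 0) ∈ Sfin n := by
  apply Finset.mem_union_left
  apply Finset.mem_union_right
  simp

lemma mem_Sfin_lt {n a b d : ℕ} (h1 : d + 2 ≤ a) (h2 : a < b) (h3 : b < n) :
    (a, b, d) ∈ Sfin n := by
  apply Finset.mem_union_right
  refine Finset.mem_image.2 ⟨⟨b - 1, a - 1, d⟩, ?_, ?_⟩
  · simp only [Finset.mem_sigma, Finset.mem_range]
    omega
  · show ((a - 1 + 1 : ℕ), (b - 1 + 1 : ℕ), d) = (a, b, d)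
    simp only [Prod.mk.injEq]
    refine ⟨by omega, by omega, trivial⟩

lemma Sfin_spec {n : ℕ} (hn : 1 ≤ n) {x : ℕ × ℕ × ℕ} (hx : x ∈ Sfin n) :
    ∃ a b d, x = (a, b, d) ∧ 1 ≤ a ∧ a ≤ b ∧ b ≤ n ∧ d < a ∧
      ((a = b ∧ (a < n ∨ d = 0)) ∨ (a < b ∧ b < n ∧ d + 2 ≤ a)) := by
  simp only [Sfin, Finset.mem_union, Finset.mem_image, Finset.mem_sigma,
    Finset.mem_range, Finset.mem_singleton] at hx
  rcases hx with (⟨p, hp, hpx⟩ | hx) | ⟨p, hp, hpx⟩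
  · obtain ⟨p1, p2⟩ := p
    simp only [Finset.mem_sigma, Finset.mem_range] at hp
    exact ⟨p1, p1, p2, hpx.symm, by omega, le_refl _, by omega, by omega,
      Or.inl ⟨rfl, Or.inl hp.1⟩⟩
  · exact ⟨n, n, 0, hx, hn, le_refl _, le_refl _, hn, Or.inl ⟨rfl, Or.inr rfl⟩⟩
  · obtain ⟨p1, p2, p3⟩ := p
    simp only [Finset.mem_sigma, Finset.mem_range] at hp
    obtain ⟨h1, h2, h3⟩ := hp
    exact ⟨p2 + 1, p1 + 1, p3, hpx.symm, by omega, by omega, by omega, by omega,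
      Or.inr ⟨by omega, by omega, by omega⟩⟩

/-- avoiding 001 as a concrete triple condition -/
lemma avoids001_iff {n : ℕ} (e : Fin n → ℕ) :
    Avoids e [0, 0, 1] ↔ ∀ i j k : Fin n, i < j → j < k → e i = e j → e k ≤ e j := by
  constructor
  · intro hav i j k hij hjk heq
    by_contra hlt
    push_neg at hlt
    apply hav
    refine ⟨![i, j, k], ?_, ?_⟩
    · intro a b hab
      fin_cases a <;> fin_cases b <;>
        first
          | exact absurd hab (by decide)
          | simpa using hij
          | simpa using hjk
          | simpa using lt_trans hij hjk
    · intro a b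
      have hx1 : e i < e k := heq ▸ hlt
      fin_cases a <;> fin_cases b <;>
        simp [List.get] <;> omega
  · rintro h ⟨s, hs, hp⟩
    have hs01 : s ⟨0, by norm_num⟩ < s ⟨1, by norm_num⟩ := hs (by decide)
    have hs12 : s ⟨1, by norm_num⟩ < s ⟨2, by norm_num⟩ := hs (by decide)
    have h01 : e (s ⟨0, by norm_num⟩) = e (s ⟨1, by norm_num⟩) :=
      (hp ⟨0, by norm_num⟩ ⟨1, by norm_num⟩).2.mp rfl
    have h12 : e (s ⟨1, by norm_num⟩) < e (s ⟨2, by norm_num⟩) :=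
      (hp ⟨1, by norm_num⟩ ⟨2, by norm_num⟩).1.mp (by norm_num)
    exact absurd (h _ _ _ hs01 hs12 h01) (by omega)

/-- avoiding 210 as a concrete triple condition -/
lemma avoids210_iff {n : ℕ} (e : Fin n → ℕ) :
    Avoids e [2, 1, 0] ↔ ∀ i j k : Fin n, i < j → j < k → e j < e i → e j ≤ e k := by
  constructor
  · intro hav i j k hij hjk hji
    by_contra hlt
    push_neg at hlt
    apply hav
    refine ⟨![i, j, k], ?_, ?_⟩
    · intro a b hab
      fin_cases a <;> fin_cases b <;>
        first
          | exact absurd hab (by decide)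
          | simpa using hij
          | simpa using hjk
          | simpa using lt_trans hij hjk
    · intro a b
      have hx1 : e k < e j := hlt
      have hx2 : e k < e i := lt_trans hlt hji
      fin_cases a <;> fin_cases b <;>
        simp [List.get] <;> omega
  · rintro h ⟨s, hs, hp⟩
    have hs01 : s ⟨0, by norm_num⟩ < s ⟨1, by norm_num⟩ := hs (by decide)
    have hs12 : s ⟨1, by norm_num⟩ < s ⟨2, by norm_num⟩ := hs (by decide)
    have h10 : e (s ⟨1, by norm_num⟩) < e (s ⟨0, by norm_num⟩) :=
      (hp ⟨1, by norm_num⟩ ⟨0, by norm_num⟩).1.mp (by norm_num)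
    have h21 : e (s ⟨2, by norm_num⟩) < e (s ⟨1, by norm_num⟩) :=
      (hp ⟨2, by norm_num⟩ ⟨1, by norm_num⟩).1.mp (by norm_num)
    exact absurd (h _ _ _ hs01 hs12 h10) (by omega)

/-- Every canonical parameter gives an avoiding inversion sequence. -/
lemma Fm_good {n : ℕ} (hn : 1 ≤ n) {x : ℕ × ℕ × ℕ} (hx : x ∈ Sfin n) :
    InvSeq (Fm n x.1 x.2.1 x.2.2) ∧ Avoids (Fm n x.1 x.2.1 x.2.2) [0, 0, 1] ∧
      Avoids (Fm n x.1 x.2.1 x.2.2) [2, 1, 0] := by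
  obtain ⟨a, b, d, hxe, ha1, hab, hbn, hda, _⟩ := Sfin_spec hn hx
  subst hxe
  refine ⟨?_, (avoids001_iff _).2 ?_, (avoids210_iff _).2 ?_⟩
  · intro i
    simp only [Fm]
    split_ifs <;> omega
  · intro i j k hij hjk heq
    rw [Fin.lt_def] at hij hjk
    simp only [Fm] at heq ⊢
    split_ifs at heq ⊢ <;> omega
  · intro i j k hij hjk hji
    rw [Fin.lt_def] at hij hjk
    simp only [Fm] at hji ⊢
    split_ifs at hji ⊢ <;> omega

/-- Every avoiding inversion sequence comes from a canonical parameter. -/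
lemma exists_param {n : ℕ} (e : Fin n → ℕ) (he : InvSeq e)
    (h1 : ∀ i j k : Fin n, i < j → j < k → e i = e j → e k ≤ e j)
    (h2 : ∀ i j k : Fin n, i < j → j < k → e j < e i → e j ≤ e k) :
    ∃ x ∈ Sfin n, Fm n x.1 x.2.1 x.2.2 = e := by
  classical
  by_cases hA : ∀ i : Fin n, e i = (i : ℕ)
  · refine ⟨(n, n, 0), mem_Sfin_stair, ?_⟩
    funext i
    simp [Fm, i.isLt, hA i]
  · push_neg at hA
    set A : Finset (Fin n) := Finset.univ.filter (fun i : Fin n => e i ≠ (i : ℕ)) with hAdef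
    have hAne : A.Nonempty := by
      obtain ⟨i, hi⟩ := hA
      exact ⟨i, by simp [hAdef, hi]⟩
    set a0 := A.min' hAne with ha0def
    have ha0A : e a0 ≠ (a0 : ℕ) := by
      have := A.min'_mem hAne
      simp only [hAdef, Finset.mem_filter] at this
      exact this.2
    have hpre : ∀ i : Fin n, (i : ℕ) < (a0 : ℕ) → e i = (i : ℕ) := by
      intro i hi
      by_contra hne
      have : i ∈ A := by
        simp only [hAdef, Finset.mem_filter]
        exact ⟨Finset.mem_univ i, hne⟩
      have := A.min'_le i this
      rw [Fin.le_def] at this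
      omega
    have ha0lt : e a0 < (a0 : ℕ) := lt_of_le_of_ne (he a0) ha0A
    have ha0pos : 1 ≤ (a0 : ℕ) := by omega
    have ha0n : (a0 : ℕ) < n := a0.isLt
    -- all tail entries are < a0
    have tail_le : ∀ j : Fin n, (a0 : ℕ) < (j : ℕ) → e j ≤ e a0 := by
      intro j hj
      refine h1 ⟨e a0, lt_trans ha0lt ha0n⟩ a0 j ?_ ?_ ?_
      · rw [Fin.lt_def]; exact ha0lt
      · rw [Fin.lt_def]; exact hj
      · exact hpre ⟨e a0, lt_trans ha0lt ha0n⟩ ha0lt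
    have tail_lt : ∀ j : Fin n, (a0 : ℕ) ≤ (j : ℕ) → e j < (a0 : ℕ) := by
      intro j hj
      rcases eq_or_lt_of_le hj with h | h
      · have : a0 = j := Fin.ext h
        rw [← this]; exact ha0lt
      · exact lt_of_le_of_lt (tail_le j h) ha0lt
    -- tail weakly decreasing
    have tail_dec : ∀ j k : Fin n, (a0 : ℕ) ≤ (j : ℕ) → j < k → e k ≤ e j := by
      intro j k hj hjk
      have hej : e j < (a0 : ℕ) := tail_lt j hj
      refine h1 ⟨e j, lt_trans hej ha0n⟩ j k ?_ hjk ?_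
      · rw [Fin.lt_def]; simp only [Fin.val_mk]; omega
      · exact hpre ⟨e j, lt_trans hej ha0n⟩ hej
    -- strict descents in the tail only from value a0 - 1
    have tail_sat : ∀ j k : Fin n, (a0 : ℕ) ≤ (j : ℕ) → j < k → e k < e j →
        e j = (a0 : ℕ) - 1 := by
      intro j k hj hjk hkj
      by_contra hne
      have hej : e j < (a0 : ℕ) := tail_lt j hj
      have hw : e j + 1 < (a0 : ℕ) := by omega
      have := h2 ⟨e j + 1, lt_trans hw ha0n⟩ j k ?_ hjk ?_
      · omega
      · rw [Fin.lt_def]; simp only [Fin.val_mk]; omega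
      · rw [hpre ⟨e j + 1, lt_trans hw ha0n⟩ hw]; simp
    set B : Finset (Fin n) :=
      Finset.univ.filter (fun i : Fin n => (a0 : ℕ) ≤ (i : ℕ) ∧ e i ≠ (a0 : ℕ) - 1)
      with hBdef
    by_cases hB : B.Nonempty
    · set b0 := B.min' hB with hb0def
      have hb0mem : (a0 : ℕ) ≤ (b0 : ℕ) ∧ e b0 ≠ (a0 : ℕ) - 1 := by
        have := B.min'_mem hB
        simp only [hBdef, Finset.mem_filter] at this
        exact this.2
      set d := e b0 with hddef
      have hd : d < (a0 : ℕ) := tail_lt b0 hb0mem.1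
      have hd2 : d + 2 ≤ (a0 : ℕ) := by
        rcases hb0mem with ⟨_, hne⟩
        omega
      have hmid : ∀ i : Fin n, (a0 : ℕ) ≤ (i : ℕ) → (i : ℕ) < (b0 : ℕ) →
          e i = (a0 : ℕ) - 1 := by
        intro i hi hib
        by_contra hne
        have hmemB : i ∈ B := by
          simp only [hBdef, Finset.mem_filter]
          exact ⟨Finset.mem_univ i, hi, hne⟩
        have := B.min'_le i hmemB
        rw [Fin.le_def] at this
        omega
      have htail : ∀ k : Fin n, (b0 : ℕ) ≤ (k : ℕ) → e k = d := by
        intro k hk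
        rcases eq_or_lt_of_le hk with h | h
        · rw [← Fin.ext h]
        · have hle : e k ≤ d := tail_dec b0 k hb0mem.1 (by rw [Fin.lt_def]; exact h)
          rcases eq_or_lt_of_le hle with h' | h'
          · exact h'
          · exfalso
            have := tail_sat b0 k hb0mem.1 (by rw [Fin.lt_def]; exact h) h'
            exact hb0mem.2 this
      refine ⟨((a0 : ℕ), (b0 : ℕ), d), ?_, ?_⟩
      · rcases eq_or_lt_of_le hb0mem.1 with h | h
        · have : ((a0 : ℕ), (b0 : ℕ), d) = ((a0 : ℕ), (a0 : ℕ), d) := by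
            simp [h]
          rw [this]
          exact mem_Sfin_eq hd ha0n
        · exact mem_Sfin_lt hd2 h b0.isLt
      · funext i
        simp only [Fm]
        split_ifs with hia hib
        · exact (hpre i hia).symm
        · exact (hmid i (by omega) hib).symm
        · exact (htail i (by omega)).symm
    · rw [Finset.not_nonempty_iff_eq_empty] at hB
      have hBall : ∀ i : Fin n, (a0 : ℕ) ≤ (i : ℕ) → e i = (a0 : ℕ) - 1 := by
        intro i hi
        by_contra hne
        have : i ∈ B := by
          simp only [hBdef, Finset.mem_filter]
          exact ⟨Finset.mem_univ i, hi, hne⟩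
        rw [hB] at this
        exact absurd this (Finset.notMem_empty i)
      refine ⟨((a0 : ℕ), (a0 : ℕ), (a0 : ℕ) - 1), mem_Sfin_eq (by omega) ha0n, ?_⟩
      funext i
      simp only [Fm]
      split_ifs with hia
      · exact (hpre i hia).symm
      · exact (hBall i (by omega)).symm

/-- the parametrization is injective -/
lemma Fm_injOn {n : ℕ} (hn : 1 ≤ n) :
    Set.InjOn (fun x : ℕ × ℕ × ℕ => Fm n x.1 x.2.1 x.2.2) (Sfin n) := by
  intro x hx y hy h
  obtain ⟨a, b, d, hxe, ha1, hab, hbn, hda, hC⟩ := Sfin_spec hn hx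
  obtain ⟨a', b', d', hye, ha1', hab', hbn', hda', hC'⟩ := Sfin_spec hn hy
  subst hxe hye
  simp only at h
  have haa : a = a' := by
    rcases lt_trichotomy a a' with hl | hl | hl
    · have hi : a < n := lt_of_lt_of_le (lt_of_lt_of_le hl hab') hbn'
      have := congrFun h ⟨a, hi⟩
      simp only [Fm, Fin.val_mk] at this
      split_ifs at this <;> omega
    · exact hl
    · have hi : a' < n := lt_of_lt_of_le (lt_of_lt_of_le hl hab) hbn
      have := congrFun h ⟨a', hi⟩
      simp only [Fm, Fin.val_mk] at this
      split_ifs at this <;> omega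
  subst haa
  have hbb : b = b' := by
    rcases lt_trichotomy b b' with hl | hl | hl
    · have hi : b < n := lt_of_lt_of_le hl hbn'
      have h1 := congrFun h ⟨b, hi⟩
      simp only [Fm, Fin.val_mk] at h1
      split_ifs at h1 <;> try omega
      -- from h1 : d = a - 1, x must be the constant branch, so a = b
      have hd1 : d = a - 1 := by omega
      have hab2 : a = b := by omega
      -- then y is in the strict branch
      have hy2 : a < b' ∧ b' < n ∧ d' + 2 ≤ a := by omega
      have h2 := congrFun h ⟨b', hy2.2.1⟩
      simp only [Fm, Fin.val_mk] at h2
      split_ifs at h2 <;> omega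
    · exact hl
    · have hi : b' < n := lt_of_lt_of_le hl hbn
      have h1 := congrFun h ⟨b', hi⟩
      simp only [Fm, Fin.val_mk] at h1
      split_ifs at h1 <;> try omega
      have hd1 : d' = a - 1 := by omega
      have hab2 : a = b' := by omega
      have hy2 : a < b ∧ b < n ∧ d + 2 ≤ a := by omega
      have h2 := congrFun h ⟨b, hy2.2.1⟩
      simp only [Fm, Fin.val_mk] at h2
      split_ifs at h2 <;> omega
  subst hbb
  have hdd : d = d' := by
    rcases lt_or_eq_of_le hbn with hl | hl
    · have h1 := congrFun h ⟨b, hl⟩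
      simp only [Fm, Fin.val_mk] at h1
      split_ifs at h1 <;> omega
    · omega
  rw [hdd]

lemma sum_range_id_choose (m : ℕ) : ∑ a ∈ Finset.range m, a = m.choose 2 := by
  induction m with
  | zero => simp
  | succ k ih =>
    rw [Finset.sum_range_succ, ih, Nat.choose_succ_succ]
    simp [Nat.choose_one_right]
    omega

lemma sum_range_choose2 (m : ℕ) :
    ∑ b ∈ Finset.range m, b.choose 2 = m.choose 3 := by
  induction m with
  | zero => simp
  | succ k ih =>
    rw [Finset.sum_range_succ, ih, Nat.add_comm]
    exact (Nat.choose_succ_succ' k 2).symm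

lemma Sfin_card (n : ℕ) (hn : 1 ≤ n) : (Sfin n).card = n.choose 3 + n := by
  classical
  have hd1 : Disjoint
      (((Finset.range n).sigma fun a => Finset.range a).image
        (fun p : Σ _ : ℕ, ℕ => (p.1, p.1, p.2)))
      ({((n : ℕ), n, 0)} : Finset (ℕ × ℕ × ℕ)) := by
    rw [Finset.disjoint_left]
    rintro x hx hx'
    simp only [Finset.mem_image, Finset.mem_sigma, Finset.mem_range] at hx
    simp only [Finset.mem_singleton] at hx'
    obtain ⟨p, ⟨hp1, _⟩, hpx⟩ := hx
    rw [← hpx] at hx'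
    simp only [Prod.mk.injEq] at hx'
    omega
  have hd2 : Disjoint
      ((((Finset.range n).sigma fun a => Finset.range a).image
        (fun p : Σ _ : ℕ, ℕ => (p.1, p.1, p.2))) ∪ {((n : ℕ), n, 0)})
      (((Finset.range (n - 1)).sigma fun b => (Finset.range b).sigma fun a =>
        Finset.range a).image (fun p : Σ _ : ℕ, Σ _ : ℕ, ℕ =>
          (p.2.1 + 1, p.1 + 1, p.2.2))) := by
    rw [Finset.disjoint_left]
    rintro x hx hx'
    simp only [Finset.mem_union, Finset.mem_image, Finset.mem_sigma, Finset.mem_range,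
      Finset.mem_singleton] at hx hx'
    obtain ⟨p, ⟨hp1, hp2, hp3⟩, hpx⟩ := hx'
    rcases hx with ⟨q, ⟨hq1, _⟩, hqx⟩ | hx
    · rw [← hpx] at hqx
      simp only [Prod.mk.injEq] at hqx
      omega
    · rw [← hpx] at hx
      simp only [Prod.mk.injEq] at hx
      omega
  rw [Sfin, Finset.card_union_of_disjoint hd2, Finset.card_union_of_disjoint hd1]
  rw [Finset.card_image_of_injOn, Finset.card_image_of_injOn]
  · rw [Finset.card_sigma, Finset.card_sigma, Finset.card_singleton]
    simp only [Finset.card_range, Finset.card_sigma]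
    have e1 : ∑ a ∈ Finset.range n, a = n.choose 2 := sum_range_id_choose n
    have e2 : ∑ b ∈ Finset.range (n - 1), ∑ a ∈ Finset.range b, a
        = (n - 1).choose 3 := by
      calc ∑ b ∈ Finset.range (n - 1), ∑ a ∈ Finset.range b, a
          = ∑ b ∈ Finset.range (n - 1), b.choose 2 := by
            exact Finset.sum_congr rfl fun b _ => sum_range_id_choose b
        _ = (n - 1).choose 3 := sum_range_choose2 (n - 1)
    rw [e1, e2]
    obtain ⟨m, rfl⟩ : ∃ m, n = m + 1 := ⟨n - 1, by omega⟩
    have h2 : (m + 1).choose 2 = m.choose 1 + m.choose 2 := Nat.choose_succ_succ' m 1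
    have h3 : (m + 1).choose 3 = m.choose 2 + m.choose 3 := Nat.choose_succ_succ' m 2
    have h1 : m.choose 1 = m := Nat.choose_one_right m
    have h4 : m + 1 - 1 = m := rfl
    rw [h4, h2, h3, h1]
    omega
  · intro p hp q hq hpq
    obtain ⟨p1, p2, p3⟩ := p
    obtain ⟨q1, q2, q3⟩ := q
    simp only [Prod.mk.injEq] at hpq
    obtain ⟨g1, g2, g3⟩ := hpq
    have e1 : p1 = q1 := by omega
    have e2 : p2 = q2 := by omega
    subst e1; subst e2; subst g3
    rfl
  · intro p hp q hq hpq
    obtain ⟨p1, p2⟩ := p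
    obtain ⟨q1, q2⟩ := q
    simp only [Prod.mk.injEq] at hpq
    obtain ⟨g1, g2, g3⟩ := hpq
    subst g1; subst g3
    rfl

theorem stmt_2 (n : ℕ) (hn : 1 ≤ n) :
    Nat.card {e : Fin n → ℕ // InvSeq e ∧ Avoids e [0,0,1] ∧ Avoids e [2,1,0]}
      = Nat.choose n 3 + n := by
  classical
  have hchar : ∀ e : Fin n → ℕ,
      (InvSeq e ∧ Avoids e [0,0,1] ∧ Avoids e [2,1,0]) ↔
        e ∈ (Sfin n).image (fun x : ℕ × ℕ × ℕ => Fm n x.1 x.2.1 x.2.2) := by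
    intro e
    constructor
    · rintro ⟨he, h001, h210⟩
      rw [avoids001_iff] at h001
      rw [avoids210_iff] at h210
      obtain ⟨x, hx, hxe⟩ := exists_param e he h001 h210
      exact Finset.mem_image.2 ⟨x, hx, hxe⟩
    · intro hmem
      obtain ⟨x, hx, hxe⟩ := Finset.mem_image.1 hmem
      rw [← hxe]
      exact Fm_good hn hx
  have hequiv : {e : Fin n → ℕ // InvSeq e ∧ Avoids e [0,0,1] ∧ Avoids e [2,1,0]} ≃
      {e : Fin n → ℕ // e ∈ (Sfin n).image (fun x : ℕ × ℕ × ℕ => Fm n x.1 x.2.1 x.2.2)} :=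
    Equiv.subtypeEquivRight hchar
  rw [Nat.card_congr hequiv]
  rw [Nat.card_eq_finsetCard]
  rw [Finset.card_image_of_injOn (Fm_injOn hn)]
  exact Sfin_card n hn
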